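/- Let $\eta \in [1/2, 1)$, $\mu \in (0,1]$, and let $\{\gamma_k\}$ be a positive nonincreasing sequence. Suppose that for some index $k_0$ we have $\phi_{k_0} \le (1-\eta)^{1/\mu}$ and $\gamma_{k_0} \le \eta(1-\eta)^{1+1/\mu}$, and that the nonnegative sequence $\{\phi_k\}$ satisfies $\phi_{k+1} \le \phi_k \max\{\eta, 1-\phi_k^{\mu}\} + \gamma_k$ for all $k$. Then $\phi_k \le (1-\eta)^{1/\mu}$ for all $k \ge k_0$. -/

import Mathlib

/-- Monotonicity-type bound: for `0 ≤ x ≤ B` with `B ^ μ ≤ 1/2`,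
`x (1 - x^μ) ≤ B (1 - B^μ)`. -/
lemma stmt3_aux (μ B x : ℝ) (hμ : 0 < μ) (hμ' : μ ≤ 1) (hB : 0 < B)
    (hBμ : B ^ μ ≤ 1 / 2) (hx : 0 ≤ x) (hxB : x ≤ B) :
    x * (1 - x ^ μ) ≤ B * (1 - B ^ μ) := by
  set t := x / B with ht
  have ht0 : 0 ≤ t := div_nonneg hx hB.le
  have ht1 : t ≤ 1 := (div_le_one hB).mpr hxB
  have hxeq : x = t * B := by rw [ht, div_mul_cancel₀ x hB.ne']
  have hxpow : x ^ μ = t ^ μ * B ^ μ := by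
    rw [hxeq, Real.mul_rpow ht0 hB.le]
  have htt : t ^ 2 ≤ t * t ^ μ := by
    rcases eq_or_lt_of_le ht0 with h0 | h0
    · simp [← h0, Real.zero_rpow hμ.ne']
    · have : t ^ (1:ℝ) ≤ t ^ μ := Real.rpow_le_rpow_of_exponent_ge h0 ht1 hμ'
      rw [Real.rpow_one] at this
      nlinarith
  have htt1 : t * t ^ μ ≤ 1 := by
    have h1 : t ^ μ ≤ 1 := Real.rpow_le_one ht0 ht1 hμ.le
    have h2 : 0 ≤ t ^ μ := Real.rpow_nonneg ht0 μ
    nlinarith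
  have hBμ0 : 0 ≤ B ^ μ := Real.rpow_nonneg hB.le μ
  -- goal in terms of t
  have key : t * (1 - t ^ μ * B ^ μ) ≤ 1 - B ^ μ := by nlinarith
  rw [hxpow, hxeq]
  calc t * B * (1 - t ^ μ * B ^ μ) = (t * (1 - t ^ μ * B ^ μ)) * B := by ring
    _ ≤ (1 - B ^ μ) * B := by
        apply mul_le_mul_of_nonneg_right key hB.le
    _ = B * (1 - B ^ μ) := by ring

/-- Step 2, invariance: once `φ` enters `[0, (1-η)^(1/μ)]` at an
index `k₀` where `γ k₀ ≤ η (1-η)^(1+1/μ)`, it stays in that region. -/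
theorem stmt3 (γ φ : ℕ → ℝ) (η μ : ℝ) (k₀ : ℕ)
    (hη : 1 / 2 ≤ η) (hη' : η < 1) (hμ : 0 < μ) (hμ' : μ ≤ 1)
    (hγpos : ∀ k, 0 < γ k) (hγmono : ∀ k, γ (k + 1) ≤ γ k)
    (hφ : ∀ k, 0 ≤ φ k)
    (hrec : ∀ k, φ (k + 1) ≤ φ k * max η (1 - φ k ^ μ) + γ k)
    (hk₀φ : φ k₀ ≤ (1 - η) ^ (1 / μ))
    (hk₀γ : γ k₀ ≤ η * (1 - η) ^ (1 + 1 / μ)) :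
    ∀ k ≥ k₀, φ k ≤ (1 - η) ^ (1 / μ) := by
  have h1η : 0 < 1 - η := by linarith
  set B := (1 - η) ^ (1 / μ) with hBdef
  have hB0 : 0 < B := Real.rpow_pos_of_pos h1η _
  have hBμ : B ^ μ = 1 - η := by
    rw [hBdef, ← Real.rpow_mul h1η.le, one_div_mul_cancel hμ.ne', Real.rpow_one]
  have hBμhalf : B ^ μ ≤ 1 / 2 := by rw [hBμ]; linarith
  have hγk : ∀ k ≥ k₀, γ k ≤ γ k₀ := by
    intro k hk
    induction k, hk using Nat.le_induction with
    | base => exact le_refl _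
    | succ n hn ih => exact (hγmono n).trans ih
  have hsplit : (1 - η) ^ (1 + 1 / μ) = (1 - η) * B := by
    rw [hBdef, Real.rpow_add h1η, Real.rpow_one]
  intro k hk
  induction k, hk using Nat.le_induction with
  | base => exact hk₀φ
  | succ n hn ih =>
    have hmax : φ n * max η (1 - φ n ^ μ) ≤ η * B := by
      rw [mul_max_of_nonneg _ _ (hφ n)]
      apply max_le
      · calc φ n * η ≤ B * η := mul_le_mul_of_nonneg_right ih (by linarith)
          _ = η * B := mul_comm _ _
      · have := stmt3_aux μ B (φ n) hμ hμ' hB0 hBμhalf (hφ n) ih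
        calc φ n * (1 - φ n ^ μ) ≤ B * (1 - B ^ μ) := this
          _ = η * B := by rw [hBμ]; ring
    have hγ : γ n ≤ η * ((1 - η) * B) := by
      calc γ n ≤ γ k₀ := hγk n hn
        _ ≤ η * (1 - η) ^ (1 + 1 / μ) := hk₀γ
        _ = η * ((1 - η) * B) := by rw [hsplit]
    have := hrec n
    nlinarith [hB0.le, mul_nonneg (mul_nonneg h1η.le h1η.le) hB0.le]
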